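/- If X is a topological space with the discrete topology and Y is a T-locally compact topological space, then the product space X × Y is T-locally compact. -/
import Mathlib


def TLocallyCompact (X : Type*) [TopologicalSpace X] : Prop :=
  ∀ (x : X) (U : Set X), IsOpen U → x ∈ U →
    ∃ V : Set X, IsOpen V ∧ x ∈ V ∧ V ⊆ U ∧ IsCompact (frontier V)

theorem discrete_prod_tLocallyCompact (X Y : Type*) [TopologicalSpace X]
    [DiscreteTopology X] [TopologicalSpace Y] (hY : TLocallyCompact Y) :
    TLocallyCompact (X × Y) := by
  rintro ⟨x, y⟩ U hU hxy
  have hslice : IsOpen {y' : Y | (x, y') ∈ U} := by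
    have : Continuous (fun y' : Y => (x, y')) := by continuity
    exact hU.preimage this
  obtain ⟨V, hVopen, hyV, hVsub, hVfr⟩ := hY y _ hslice hxy
  refine ⟨{x} ×ˢ V, (isOpen_discrete _).prod hVopen, ⟨rfl, hyV⟩, ?_, ?_⟩
  · rintro ⟨a, b⟩ ⟨ha, hb⟩
    simp only [Set.mem_singleton_iff] at ha
    subst ha
    exact hVsub hb
  · rw [frontier_prod_eq]
    have h1 : frontier ({x} : Set X) = ∅ := by
      exact (isClopen_discrete _).frontier_eq
    rw [h1, closure_eq_iff_isClosed.mpr (isClosed_discrete _)]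
    simp only [Set.empty_prod, Set.union_empty]
    exact (isCompact_singleton).prod hVfr
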